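/- Let M > 2 and β₁ ≥ β₂ > 0 and p_max > 0 be real numbers with p_max ≥ (β₁ − β₂) / (β₁·β₂·(M − 2)). Then the supremum of R^mMIMO(p₁, p₂) = log₂(1 + (M − 2)·β₁·p₁) + log₂(1 + (M − 2)·β₂·p₂) over all p₁ ≥ 0, p₂ ≥ 0 with p₁ + p₂ ≤ p_max equals log₂( (β₁ + β₂ + p_max·β₁·β₂·(M − 2))² / (4·β₁·β₂) ). -/
import Mathlib


/-- Equation (20): when `p_max ≥ (β₁ − β₂)/(β₁·β₂·(M−2))`, the supremum of the
two-user mMIMO sum rate `log₂(1 + (M−2)·β₁·p₁) + log₂(1 + (M−2)·β₂·p₂)` over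
`{p₁ ≥ 0, p₂ ≥ 0, p₁ + p₂ ≤ p_max}` equals
`log₂((β₁ + β₂ + p_max·β₁·β₂·(M−2))²/(4·β₁·β₂))`. -/
theorem mmimo_two_user_max_sum_rate_interior
    (M β₁ β₂ pmax : ℝ) (hM : 2 < M) (hβ₂ : 0 < β₂) (hβ : β₂ ≤ β₁)
    (hpmax : 0 < pmax) (hbudget : (β₁ - β₂) / (β₁ * β₂ * (M - 2)) ≤ pmax) :
    sSup {x : ℝ | ∃ p₁ p₂ : ℝ, 0 ≤ p₁ ∧ 0 ≤ p₂ ∧ p₁ + p₂ ≤ pmax ∧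
        x = Real.logb 2 (1 + (M - 2) * β₁ * p₁) +
            Real.logb 2 (1 + (M - 2) * β₂ * p₂)} =
    Real.logb 2 ((β₁ + β₂ + pmax * β₁ * β₂ * (M - 2)) ^ 2 / (4 * β₁ * β₂)) := by
  have hβ₁ : 0 < β₁ := lt_of_lt_of_le hβ₂ hβ
  have ha : 0 < M - 2 := by linarith
  have hden : 0 < β₁ * β₂ * (M - 2) := by positivity
  set d : ℝ := (β₁ - β₂) / (β₁ * β₂ * (M - 2)) with hddef
  have hd0 : 0 ≤ d := div_nonneg (by linarith) hden.le
  have hdpmax : d ≤ pmax := hbudget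
  set S : ℝ := β₁ + β₂ + pmax * β₁ * β₂ * (M - 2) with hSdef
  have hSpos : 0 < S := by rw [hSdef]; positivity
  apply IsGreatest.csSup_eq
  constructor
  · refine ⟨(pmax + d) / 2, (pmax - d) / 2, by linarith, by linarith, by linarith, ?_⟩
    have hu : 1 + (M - 2) * β₁ * ((pmax + d) / 2) = S / (2 * β₂) := by
      rw [hddef, hSdef]; field_simp; ring
    have hv : 1 + (M - 2) * β₂ * ((pmax - d) / 2) = S / (2 * β₁) := by
      rw [hddef, hSdef]; field_simp; ring
    rw [hu, hv, ← Real.logb_mul (by positivity) (by positivity)]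
    congr 1
    field_simp
    ring
  · rintro x ⟨p₁, p₂, h1, h2, h3, rfl⟩
    have hu : (0:ℝ) < 1 + (M - 2) * β₁ * p₁ := by nlinarith
    have hv : (0:ℝ) < 1 + (M - 2) * β₂ * p₂ := by nlinarith
    rw [← Real.logb_mul hu.ne' hv.ne']
    apply Real.logb_le_logb_of_le one_lt_two (by positivity)
    rw [le_div_iff₀ (by positivity)]
    have key : β₂ * (1 + (M - 2) * β₁ * p₁) + β₁ * (1 + (M - 2) * β₂ * p₂) ≤ S := by
      rw [hSdef]
      nlinarith [mul_le_mul_of_nonneg_left h3 hden.le]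
    nlinarith [sq_nonneg (β₂ * (1 + (M - 2) * β₁ * p₁) - β₁ * (1 + (M - 2) * β₂ * p₂)),
      mul_pos (mul_pos hβ₂ hu) (mul_pos hβ₁ hv),
      mul_pos hβ₂ hu, mul_pos hβ₁ hv]
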